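/- Let a ≥ 2 be a real number, and let x ≥ 0 and ε > 0 satisfy x + ε ≤ 1. Then 1 < ζ_a'(x + ε)/ζ_a'(x) ≤ (1 + εa)², where ζ_a'(t) = a/(a − (a−1)t)² denotes the derivative of ζ_a(t) = t/(a − (a−1)t). -/

import Mathlib

/-- Derivative distortion bound for `ζ_a` (Proposition 2.4, first estimate):
for `a ≥ 2`, `x ≥ 0`, `ε > 0` with `x + ε ≤ 1`, one has
`1 < ζ_a'(x+ε)/ζ_a'(x) ≤ (1 + εa)²` where `ζ_a'(t) = a/(a-(a-1)t)²`. -/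
theorem yoccoz_zeta_deriv_ratio_bound (a x ε : ℝ) (ha : 2 ≤ a) (hx : 0 ≤ x) (hε : 0 < ε)
    (hxε : x + ε ≤ 1) :
    1 < (a / (a - (a - 1) * (x + ε)) ^ 2) / (a / (a - (a - 1) * x) ^ 2) ∧
    (a / (a - (a - 1) * (x + ε)) ^ 2) / (a / (a - (a - 1) * x) ^ 2) ≤ (1 + ε * a) ^ 2 := by
  have ha1 : 1 ≤ a - 1 := by linarith
  have hD2 : 1 ≤ a - (a - 1) * (x + ε) := by nlinarith
  have hεa : 0 < (a - 1) * ε := by nlinarith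
  have ha0 : 0 < a := by linarith
  have hD1 : (0:ℝ) < a - (a - 1) * x := by nlinarith
  have hr : (a / (a - (a - 1) * (x + ε)) ^ 2) / (a / (a - (a - 1) * x) ^ 2)
      = (a - (a - 1) * x) ^ 2 / (a - (a - 1) * (x + ε)) ^ 2 := by
    field_simp
  rw [hr]
  constructor
  · rw [lt_div_iff₀ (by positivity)]
    nlinarith
  · have key : a - (a - 1) * x ≤ (1 + ε * a) * (a - (a - 1) * (x + ε)) := by nlinarith
    rw [div_le_iff₀ (by positivity)]
    calc (a - (a - 1) * x) ^ 2 ≤ ((1 + ε * a) * (a - (a - 1) * (x + ε))) ^ 2 :=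
          pow_le_pow_left₀ hD1.le key 2
      _ = (1 + ε * a) ^ 2 * (a - (a - 1) * (x + ε)) ^ 2 := by ring
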